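/- Telescoping lemma (simulation lemma): for two transition kernels P1 and P2 on the same finite state and action spaces (same reward, discount, and initial distribution) and any policy π, J[P1](π) − J[P2](π) = (γ/(1−γ)) · Σ_{(s,a)} ρ[P1,π](s,a) · Σ_{s'} ( P1(s,a)(s') − P2(s,a)(s') ) · V[P2,π](s'). -/
import Mathlib


open Real

noncomputable section

variable {S A : Type*} [Fintype S] [Fintype A]

/-- Time-`t` state-action distribution `d_t[P,pol]` started from the initial state
distribution `ρ0`:  `d_0(s,a) = ρ0(s)·pol(s)(a)` and
`d_{t+1}(s',a') = Σ_{(s,a)} d_t(s,a)·P(s,a)(s')·pol(s')(a')`. -/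
def dDist (P : S → A → PMF S) (pol : S → PMF A) (ρ0 : PMF S) : ℕ → S × A → ℝ
  | 0 => fun p => (ρ0 p.1).toReal * (pol p.1 p.2).toReal
  | (t + 1) => fun p' =>
      ∑ p : S × A, dDist P pol ρ0 t p * (P p.1 p.2 p'.1).toReal * (pol p'.1 p'.2).toReal

/-- Normalized state-action occupancy `ρ[P,pol](s,a) = (1−γ)·Σ_t γ^t·d_t[P,pol](s,a)`. -/
def occ (P : S → A → PMF S) (pol : S → PMF A) (ρ0 : PMF S) (γ : ℝ) (p : S × A) : ℝ :=
  (1 - γ) * ∑' t : ℕ, γ ^ t * dDist P pol ρ0 t p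

/-- Normalized state occupancy `ν[P,pol](s) = Σ_a ρ[P,pol](s,a)`. -/
def stateOcc (P : S → A → PMF S) (pol : S → PMF A) (ρ0 : PMF S) (γ : ℝ) (s : S) : ℝ :=
  ∑ a : A, occ P pol ρ0 γ (s, a)

/-- Expected discounted return `J[P](pol) = Σ_t γ^t Σ_{(s,a)} d_t[P,pol](s,a)·r(s,a)`. -/
def Jret (P : S → A → PMF S) (pol : S → PMF A) (ρ0 : PMF S) (r : S → A → ℝ) (γ : ℝ) : ℝ :=
  ∑' t : ℕ, γ ^ t * ∑ p : S × A, dDist P pol ρ0 t p * r p.1 p.2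

/-- Value function `V[P,pol](s)`: the return with the recursion started from the point
distribution at `s` (i.e. `d_0(s',a) = 1[s'=s]·pol(s')(a)`). -/
def Vval (P : S → A → PMF S) (pol : S → PMF A) (r : S → A → ℝ) (γ : ℝ) (s : S) : ℝ :=
  Jret P pol (PMF.pure s) r γ

/-- Action-value function `Q[P,pol](s,a) = r(s,a) + γ·Σ_{s'} P(s,a)(s')·V[P,pol](s')`. -/
def Qval (P : S → A → PMF S) (pol : S → PMF A) (r : S → A → ℝ) (γ : ℝ) (s : S) (a : A) : ℝ :=
  r s a + γ * ∑ s' : S, (P s a s').toReal * Vval P pol r γ s'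

/-- Total variation distance between two pmfs on a finite type:
`D_TV(p,q) = (1/2)·Σ_x |p(x) − q(x)|`. -/
def dTV {X : Type*} [Fintype X] (p q : PMF X) : ℝ :=
  (1 / 2) * ∑ x : X, |(p x).toReal - (q x).toReal|

/-- Kullback–Leibler divergence between two pmfs on a finite type (with `q` everywhere
positive): `D_KL(p‖q) = Σ_x p(x)·log(p(x)/q(x))`, with the convention `0·log 0 = 0`. -/
def dKL {X : Type*} [Fintype X] (p q : PMF X) : ℝ :=
  ∑ x : X, (p x).toReal * Real.log ((p x).toReal / (q x).toReal)

/-- Shannon entropy of a pmf on a finite type, `H(p) = −Σ_x p(x)·log p(x)`,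
with the convention `0·log 0 = 0`. -/
def entropyPMF {X : Type*} [Fintype X] (p : PMF X) : ℝ :=
  - ∑ x : X, (p x).toReal * Real.log (p x).toReal

end
section helpers
variable {S A : Type*} [Fintype S] [Fintype A]

lemma pmf_sum_toReal {X : Type*} [Fintype X] (p : PMF X) : ∑ x, (p x).toReal = 1 := by
  have h := p.tsum_coe
  rw [tsum_fintype] at h
  have h2 : ((∑ x, p x : ENNReal)).toReal = 1 := by rw [h]; simp
  rw [ENNReal.toReal_sum (fun a _ => p.apply_ne_top a)] at h2
  exact h2

variable (P : S → A → PMF S) (pol : S → PMF A) (ρ0 : PMF S)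

lemma dDist_nonneg : ∀ t p, 0 ≤ dDist P pol ρ0 t p
  | 0, p => mul_nonneg ENNReal.toReal_nonneg ENNReal.toReal_nonneg
  | (t+1), p => Finset.sum_nonneg fun q _ => mul_nonneg (mul_nonneg
      (dDist_nonneg t q) ENNReal.toReal_nonneg) ENNReal.toReal_nonneg

lemma dDist_sum : ∀ t, ∑ p : S × A, dDist P pol ρ0 t p = 1
  | 0 => by
      rw [Fintype.sum_prod_type]
      simp only [dDist]
      calc ∑ s : S, ∑ a : A, (ρ0 s).toReal * (pol s a).toReal
          = ∑ s : S, (ρ0 s).toReal * ∑ a : A, (pol s a).toReal := by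
            simp [Finset.mul_sum]
        _ = 1 := by simp [pmf_sum_toReal]
  | (t+1) => by
      simp only [dDist]
      rw [Fintype.sum_prod_type]
      calc ∑ s' : S, ∑ a' : A, ∑ p : S × A,
            dDist P pol ρ0 t p * (P p.1 p.2 s').toReal * (pol s' a').toReal
          = ∑ s' : S, ∑ p : S × A, dDist P pol ρ0 t p * (P p.1 p.2 s').toReal := by
            refine Finset.sum_congr rfl fun s' _ => ?_
            rw [Finset.sum_comm]
            refine Finset.sum_congr rfl fun p _ => ?_
            rw [← Finset.mul_sum, pmf_sum_toReal, mul_one]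
        _ = ∑ p : S × A, dDist P pol ρ0 t p * ∑ s' : S, (P p.1 p.2 s').toReal := by
            rw [Finset.sum_comm]; simp [Finset.mul_sum]
        _ = 1 := by simp [pmf_sum_toReal, dDist_sum t]

lemma dDist_le_one (t : ℕ) (p : S × A) : dDist P pol ρ0 t p ≤ 1 := by
  calc dDist P pol ρ0 t p ≤ ∑ q : S × A, dDist P pol ρ0 t q :=
        Finset.single_le_sum (fun q _ => dDist_nonneg P pol ρ0 t q) (Finset.mem_univ p)
    _ = 1 := dDist_sum P pol ρ0 t

lemma abs_dsum_le (f : S × A → ℝ) (M : ℝ) (hM : ∀ p, |f p| ≤ M) (t : ℕ) :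
    |∑ p : S × A, dDist P pol ρ0 t p * f p| ≤ M := by
  calc |∑ p : S × A, dDist P pol ρ0 t p * f p|
      ≤ ∑ p : S × A, |dDist P pol ρ0 t p * f p| := Finset.abs_sum_le_sum_abs _ _
    _ ≤ ∑ p : S × A, dDist P pol ρ0 t p * M := by
        refine Finset.sum_le_sum fun p _ => ?_
        rw [abs_mul, abs_of_nonneg (dDist_nonneg P pol ρ0 t p)]
        exact mul_le_mul_of_nonneg_left (hM p) (dDist_nonneg P pol ρ0 t p)
    _ = M := by rw [← Finset.sum_mul, dDist_sum, one_mul]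

lemma summable_geom_bdd {γ : ℝ} (hγ0 : 0 ≤ γ) (hγ1 : γ < 1) (c : ℕ → ℝ) (C : ℝ)
    (hC : ∀ t, |c t| ≤ C) : Summable (fun t => γ ^ t * c t) := by
  have h : Summable (fun t : ℕ => γ ^ t * C) :=
    (summable_geometric_of_lt_one hγ0 hγ1).mul_right C
  refine Summable.of_abs (Summable.of_nonneg_of_le (fun t => abs_nonneg _) (fun t => ?_) h)
  rw [abs_mul, abs_pow, abs_of_nonneg hγ0]
  exact mul_le_mul_of_nonneg_left (hC t) (pow_nonneg hγ0 t)

lemma summable_d {γ : ℝ} (hγ0 : 0 ≤ γ) (hγ1 : γ < 1) (p : S × A) :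
    Summable (fun t => γ ^ t * dDist P pol ρ0 t p) :=
  summable_geom_bdd hγ0 hγ1 _ 1 fun t => by
    rw [abs_of_nonneg (dDist_nonneg P pol ρ0 t p)]; exact dDist_le_one P pol ρ0 t p

lemma summable_J {γ : ℝ} (hγ0 : 0 ≤ γ) (hγ1 : γ < 1) (f : S × A → ℝ) (M : ℝ)
    (hM : ∀ p, |f p| ≤ M) :
    Summable (fun t => γ ^ t * ∑ p : S × A, dDist P pol ρ0 t p * f p) :=
  summable_geom_bdd hγ0 hγ1 _ M (abs_dsum_le P pol ρ0 f M hM)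

lemma dDist_pure_lin : ∀ (t : ℕ) (p : S × A), dDist P pol ρ0 t p
    = ∑ s : S, (ρ0 s).toReal * dDist P pol (PMF.pure s) t p
  | 0, p => by
      simp only [dDist, PMF.pure_apply]
      rw [Finset.sum_eq_single p.1]
      · simp
      · intro b _ hb; simp [Ne.symm hb]
      · intro h; exact absurd (Finset.mem_univ _) h
  | (t+1), p => by
      simp only [dDist, dDist_pure_lin t, Finset.sum_mul, Finset.mul_sum]
      rw [Finset.sum_comm]
      exact Finset.sum_congr rfl fun s _ => Finset.sum_congr rfl fun q _ => by ring

lemma Jret_lin (r : S → A → ℝ) (rmax : ℝ) (hr : ∀ s a, |r s a| ≤ rmax)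
    {γ : ℝ} (hγ0 : 0 ≤ γ) (hγ1 : γ < 1) :
    Jret P pol ρ0 r γ = ∑ s : S, (ρ0 s).toReal * Vval P pol r γ s := by
  rw [Jret]
  have h1 : ∀ t : ℕ, γ ^ t * ∑ p : S × A, dDist P pol ρ0 t p * r p.1 p.2
      = ∑ s : S, (ρ0 s).toReal *
        (γ ^ t * ∑ p : S × A, dDist P pol (PMF.pure s) t p * r p.1 p.2) := by
    intro t
    simp only [dDist_pure_lin P pol ρ0 t, Finset.sum_mul, Finset.mul_sum]
    rw [Finset.sum_comm]
    exact Finset.sum_congr rfl fun s _ => Finset.sum_congr rfl fun q _ => by ring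
  rw [funext h1, Summable.tsum_finsetSum (fun s _ =>
    ((summable_J P pol (PMF.pure s) hγ0 hγ1 (fun p => r p.1 p.2) rmax
      (fun p => hr p.1 p.2)).mul_left _))]
  exact Finset.sum_congr rfl fun s _ => tsum_mul_left

lemma dDist_succ (t : ℕ) (p' : S × A) :
    dDist P pol ρ0 (t+1) p'
    = ∑ p : S × A, dDist P pol ρ0 t p * (P p.1 p.2 p'.1).toReal * (pol p'.1 p'.2).toReal := rfl

lemma dDist_pure_succ (s : S) : ∀ (t : ℕ) (p : S × A),
    dDist P pol (PMF.pure s) (t+1) p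
    = ∑ s1 : S, (∑ a : A, (pol s a).toReal * (P s a s1).toReal)
        * dDist P pol (PMF.pure s1) t p
  | 0, p => by
      simp only [dDist, PMF.pure_apply, apply_ite ENNReal.toReal, ENNReal.toReal_one,
        ENNReal.toReal_zero, ite_mul, mul_ite, one_mul, zero_mul, mul_one, mul_zero]
      rw [Fintype.sum_prod_type]
      rw [Finset.sum_eq_single s (fun b _ hb => by simp [hb])
        (fun h => absurd (Finset.mem_univ _) h)]
      rw [Finset.sum_eq_single p.1 (fun b _ hb => by simp [Ne.symm hb])
        (fun h => absurd (Finset.mem_univ _) h)]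
      simp [Finset.sum_mul]
  | (t+1), p => by
      rw [dDist_succ]
      simp only [dDist_pure_succ s t, Finset.sum_mul, Finset.mul_sum]
      rw [Finset.sum_comm]
      refine Finset.sum_congr rfl fun s1 _ => ?_
      rw [dDist_succ]
      rw [Finset.sum_comm]
      refine Finset.sum_congr rfl fun i _ => ?_
      rw [Finset.mul_sum]
      exact Finset.sum_congr rfl fun q _ => by ring

lemma Vval_bellman (r : S → A → ℝ) (rmax : ℝ) (hr : ∀ s a, |r s a| ≤ rmax)
    {γ : ℝ} (hγ0 : 0 ≤ γ) (hγ1 : γ < 1) (s : S) :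
    Vval P pol r γ s = ∑ a : A, (pol s a).toReal *
      (r s a + γ * ∑ s' : S, (P s a s').toReal * Vval P pol r γ s') := by
  have hsum := summable_J P pol (PMF.pure s) hγ0 hγ1 (fun p => r p.1 p.2) rmax
    (fun p => hr p.1 p.2)
  have hm : ∀ t : ℕ, γ ^ (t+1) * ∑ p : S × A, dDist P pol (PMF.pure s) (t+1) p * r p.1 p.2
      = ∑ s1 : S, ((∑ a : A, (pol s a).toReal * (P s a s1).toReal) * γ) *
          (γ ^ t * ∑ p : S × A, dDist P pol (PMF.pure s1) t p * r p.1 p.2) := by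
    intro t
    simp only [dDist_pure_succ P pol s t, Finset.sum_mul, Finset.mul_sum]
    rw [Finset.sum_comm]
    exact Finset.sum_congr rfl fun s1 _ => Finset.sum_congr rfl fun q _ =>
      Finset.sum_congr rfl fun i _ => by ring
  have hc0 : ∑ p : S × A, dDist P pol (PMF.pure s) 0 p * r p.1 p.2
      = ∑ a : A, (pol s a).toReal * r s a := by
    simp only [dDist, PMF.pure_apply]
    rw [Fintype.sum_prod_type, Finset.sum_eq_single s
      (fun b _ hb => by simp [hb]) (fun h => absurd (Finset.mem_univ _) h)]
    simp
  rw [Vval, Jret, Summable.tsum_eq_zero_add hsum, pow_zero, one_mul, hc0, tsum_congr hm,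
    Summable.tsum_finsetSum (fun s1 _ => (summable_J P pol (PMF.pure s1) hγ0 hγ1 (fun p => r p.1 p.2)
      rmax (fun p => hr p.1 p.2)).mul_left _)]
  simp only [tsum_mul_left]
  simp only [mul_add, Finset.sum_add_distrib]
  congr 1
  simp only [Finset.sum_mul, Finset.mul_sum]
  rw [Finset.sum_comm]
  refine Finset.sum_congr rfl fun a _ => Finset.sum_congr rfl fun s1 _ => ?_
  rw [Vval, Jret]
  simp only [← Finset.mul_sum]
  ring

lemma occ_flow {γ : ℝ} (hγ0 : 0 ≤ γ) (hγ1 : γ < 1) (p' : S × A) :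
    occ P pol ρ0 γ p' = (1 - γ) * dDist P pol ρ0 0 p'
      + γ * ∑ p : S × A, occ P pol ρ0 γ p * (P p.1 p.2 p'.1).toReal
          * (pol p'.1 p'.2).toReal := by
  rw [occ, Summable.tsum_eq_zero_add (summable_d P pol ρ0 hγ0 hγ1 p'), pow_zero, one_mul, mul_add]
  congr 1
  have h1 : ∀ t : ℕ, γ ^ (t+1) * dDist P pol ρ0 (t+1) p'
      = ∑ p : S × A, (γ * ((P p.1 p.2 p'.1).toReal * (pol p'.1 p'.2).toReal))
          * (γ ^ t * dDist P pol ρ0 t p) := by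
    intro t
    rw [dDist_succ, Finset.mul_sum]
    exact Finset.sum_congr rfl fun q _ => by ring
  rw [tsum_congr h1, Summable.tsum_finsetSum (fun p _ => (summable_d P pol ρ0 hγ0 hγ1 p).mul_left _)]
  simp only [tsum_mul_left]
  rw [Finset.mul_sum, Finset.mul_sum]
  refine Finset.sum_congr rfl fun p _ => ?_
  rw [occ]
  ring

lemma Jret_occ (r : S → A → ℝ) {γ : ℝ} (hγ0 : 0 ≤ γ) (hγ1 : γ < 1) :
    (1 - γ) * Jret P pol ρ0 r γ = ∑ p : S × A, occ P pol ρ0 γ p * r p.1 p.2 := by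
  rw [Jret]
  have h1 : ∀ t : ℕ, γ ^ t * ∑ p : S × A, dDist P pol ρ0 t p * r p.1 p.2
      = ∑ p : S × A, (γ ^ t * dDist P pol ρ0 t p) * r p.1 p.2 := by
    intro t; rw [Finset.mul_sum]; exact Finset.sum_congr rfl fun p _ => by ring
  rw [tsum_congr h1, Summable.tsum_finsetSum (fun p _ => (summable_d P pol ρ0 hγ0 hγ1 p).mul_right _),
    Finset.mul_sum]
  refine Finset.sum_congr rfl fun p _ => ?_
  rw [occ, tsum_mul_right]
  ring

lemma dDist_factor (t : ℕ) (s : S) (a : A) :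
    dDist P pol ρ0 t (s, a) = (∑ a' : A, dDist P pol ρ0 t (s, a')) * (pol s a).toReal := by
  cases t with
  | zero =>
      simp only [dDist]
      rw [← Finset.mul_sum, pmf_sum_toReal, mul_one]
  | succ t =>
      simp only [dDist]
      rw [← Finset.sum_mul]
      congr 1
      rw [Finset.sum_comm]
      exact Finset.sum_congr rfl fun q _ => by
        rw [← Finset.mul_sum, pmf_sum_toReal, mul_one]

lemma occ_factor {γ : ℝ} (hγ0 : 0 ≤ γ) (hγ1 : γ < 1) (s : S) (a : A) :
    occ P pol ρ0 γ (s, a) = (∑ a' : A, occ P pol ρ0 γ (s, a')) * (pol s a).toReal := by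
  simp only [occ]
  have h1 : ∀ t : ℕ, γ ^ t * dDist P pol ρ0 t (s, a)
      = (γ ^ t * ∑ a' : A, dDist P pol ρ0 t (s, a')) * (pol s a).toReal := by
    intro t; rw [dDist_factor]; ring
  rw [tsum_congr h1, tsum_mul_right, ← mul_assoc, ← Finset.mul_sum,
    ← Summable.tsum_finsetSum (fun (a' : A) _ => summable_d P pol ρ0 hγ0 hγ1 (s, a'))]
  congr 2
  exact tsum_congr fun t => by rw [Finset.mul_sum]

end helpers

/-- telescoping / simulation lemma: for two transition kernels `P1,P2`
and any policy `pol`,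
`J[P1](pol) − J[P2](pol) = (γ/(1−γ)) Σ_{(s,a)} ρ[P1,pol](s,a) Σ_{s'} (P1(s,a)(s') − P2(s,a)(s'))·V[P2,pol](s')`. -/
theorem telescoping_lemma
    {S A : Type*} [Fintype S] [Fintype A] [Nonempty S] [Nonempty A]
    (P1 P2 : S → A → PMF S) (pol : S → PMF A) (ρ0 : PMF S)
    (r : S → A → ℝ) (rmax : ℝ) (hrmax : 0 ≤ rmax) (hr : ∀ s a, |r s a| ≤ rmax)
    (γ : ℝ) (hγ0 : 0 ≤ γ) (hγ1 : γ < 1) :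
    Jret P1 pol ρ0 r γ - Jret P2 pol ρ0 r γ =
      (γ / (1 - γ)) * ∑ p : S × A, occ P1 pol ρ0 γ p *
        ∑ s' : S, ((P1 p.1 p.2 s').toReal - (P2 p.1 p.2 s').toReal) * Vval P2 pol r γ s' := by
  have hne : (1 : ℝ) - γ ≠ 0 := by linarith
  -- K1: flow identity summed over actions
  have K1 : ∀ s' : S, γ * ∑ p : S × A, occ P1 pol ρ0 γ p * (P1 p.1 p.2 s').toReal
      = (∑ a' : A, occ P1 pol ρ0 γ (s', a')) - (1 - γ) * (ρ0 s').toReal := by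
    intro s'
    have h : ∑ a' : A, occ P1 pol ρ0 γ (s', a')
        = ∑ a' : A, ((1 - γ) * dDist P1 pol ρ0 0 (s', a')
          + γ * ∑ p : S × A, occ P1 pol ρ0 γ p * (P1 p.1 p.2 s').toReal
              * (pol s' a').toReal) :=
      Finset.sum_congr rfl fun a' _ => occ_flow P1 pol ρ0 hγ0 hγ1 (s', a')
    rw [Finset.sum_add_distrib] at h
    have h2 : ∑ a' : A, (1 - γ) * dDist P1 pol ρ0 0 (s', a')
        = (1 - γ) * (ρ0 s').toReal := by
      simp only [dDist]
      rw [← Finset.mul_sum, ← Finset.mul_sum, pmf_sum_toReal, mul_one]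
    have h3 : ∑ a' : A, γ * ∑ p : S × A, occ P1 pol ρ0 γ p * (P1 p.1 p.2 s').toReal
          * (pol s' a').toReal
        = γ * ∑ p : S × A, occ P1 pol ρ0 γ p * (P1 p.1 p.2 s').toReal := by
      have h4 : ∀ a' : A, ∑ p : S × A, occ P1 pol ρ0 γ p * (P1 p.1 p.2 s').toReal
            * (pol s' a').toReal
          = (∑ p : S × A, occ P1 pol ρ0 γ p * (P1 p.1 p.2 s').toReal)
            * (pol s' a').toReal := fun a' => (Finset.sum_mul _ _ _).symm
      simp only [h4]
      rw [← Finset.mul_sum, ← Finset.mul_sum, pmf_sum_toReal, mul_one]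
    rw [h2, h3] at h
    linarith [h]
  -- K2: occupancy against Q equals state occupancy against V
  have K2 : ∑ p : S × A, occ P1 pol ρ0 γ p * (r p.1 p.2
        + γ * ∑ s' : S, (P2 p.1 p.2 s').toReal * Vval P2 pol r γ s')
      = ∑ s : S, (∑ a' : A, occ P1 pol ρ0 γ (s, a')) * Vval P2 pol r γ s := by
    rw [Fintype.sum_prod_type]
    refine Finset.sum_congr rfl fun s _ => ?_
    calc ∑ a : A, occ P1 pol ρ0 γ (s, a) * (r s a
          + γ * ∑ s' : S, (P2 s a s').toReal * Vval P2 pol r γ s')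
        = (∑ a' : A, occ P1 pol ρ0 γ (s, a')) * ∑ a : A, (pol s a).toReal * (r s a
            + γ * ∑ s' : S, (P2 s a s').toReal * Vval P2 pol r γ s') := by
          rw [Finset.mul_sum]
          exact Finset.sum_congr rfl fun a _ => by
            rw [occ_factor P1 pol ρ0 hγ0 hγ1 s a]; ring
      _ = (∑ a' : A, occ P1 pol ρ0 γ (s, a')) * Vval P2 pol r γ s := by
          rw [← Vval_bellman P2 pol r rmax hr hγ0 hγ1 s]
  have K3 : Jret P2 pol ρ0 r γ = ∑ s : S, (ρ0 s).toReal * Vval P2 pol r γ s :=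
    Jret_lin P2 pol ρ0 r rmax hr hγ0 hγ1
  have K4 : (1 - γ) * Jret P1 pol ρ0 r γ
      = ∑ p : S × A, occ P1 pol ρ0 γ p * r p.1 p.2 :=
    Jret_occ P1 pol ρ0 r hγ0 hγ1
  -- A-term
  have hA : γ * ∑ p : S × A, occ P1 pol ρ0 γ p
        * ∑ s' : S, (P1 p.1 p.2 s').toReal * Vval P2 pol r γ s'
      = ∑ s : S, (∑ a' : A, occ P1 pol ρ0 γ (s, a')) * Vval P2 pol r γ s
        - (1 - γ) * Jret P2 pol ρ0 r γ := by
    have hswap : ∑ p : S × A, occ P1 pol ρ0 γ p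
          * ∑ s' : S, (P1 p.1 p.2 s').toReal * Vval P2 pol r γ s'
        = ∑ s' : S, (∑ p : S × A, occ P1 pol ρ0 γ p * (P1 p.1 p.2 s').toReal)
            * Vval P2 pol r γ s' := by
      simp only [Finset.mul_sum, Finset.sum_mul]
      rw [Finset.sum_comm]
      exact Finset.sum_congr rfl fun s' _ => Finset.sum_congr rfl fun p _ => by ring
    rw [hswap, Finset.mul_sum, K3, Finset.mul_sum, ← Finset.sum_sub_distrib]
    refine Finset.sum_congr rfl fun s' _ => ?_
    rw [show γ * ((∑ p : S × A, occ P1 pol ρ0 γ p * (P1 p.1 p.2 s').toReal)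
          * Vval P2 pol r γ s')
        = (γ * ∑ p : S × A, occ P1 pol ρ0 γ p * (P1 p.1 p.2 s').toReal)
          * Vval P2 pol r γ s' from by ring, K1 s']
    ring
  -- B-term
  have hB : γ * ∑ p : S × A, occ P1 pol ρ0 γ p
        * ∑ s' : S, (P2 p.1 p.2 s').toReal * Vval P2 pol r γ s'
      = ∑ s : S, (∑ a' : A, occ P1 pol ρ0 γ (s, a')) * Vval P2 pol r γ s
        - (1 - γ) * Jret P1 pol ρ0 r γ := by
    rw [← K2, K4, Finset.mul_sum, ← Finset.sum_sub_distrib]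
    exact Finset.sum_congr rfl fun p _ => by ring
  -- combine
  have hsplit : ∀ p : S × A, ∑ s' : S,
        ((P1 p.1 p.2 s').toReal - (P2 p.1 p.2 s').toReal) * Vval P2 pol r γ s'
      = (∑ s' : S, (P1 p.1 p.2 s').toReal * Vval P2 pol r γ s')
        - ∑ s' : S, (P2 p.1 p.2 s').toReal * Vval P2 pol r γ s' := by
    intro p
    rw [← Finset.sum_sub_distrib]
    exact Finset.sum_congr rfl fun s' _ => by ring
  have key : γ * ∑ p : S × A, occ P1 pol ρ0 γ p * ∑ s' : S,
        ((P1 p.1 p.2 s').toReal - (P2 p.1 p.2 s').toReal) * Vval P2 pol r γ s'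
      = (1 - γ) * (Jret P1 pol ρ0 r γ - Jret P2 pol ρ0 r γ) := by
    simp only [hsplit, mul_sub, Finset.sum_sub_distrib]
    rw [hA, hB]
    ring
  rw [div_mul_eq_mul_div, eq_div_iff hne]
  linear_combination -key
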